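/- Let f_{κ,θ}(x) = c_{k,κ} exp(κ x'θ) be the FvML density and fix a unit vector θ. Then the map κ ↦ ∫_{S^{k-1}} (√(f_{κ+s,θ}(x)) − √(f_{κ,θ}(x)) − s ∂_κ √(f_{κ,θ}(x)))² dσ(x) is o(s²) as s → 0, for every κ > 0; i.e., κ ↦ √(f_{κ,θ}) is differentiable in quadratic mean. -/

import Mathlib

open MeasureTheory Real Asymptotics

/-- Modified Bessel function of the first kind (integral representation). -/
noncomputable def besselI (ν κ : ℝ) : ℝ :=
  (κ / 2) ^ ν / (Real.sqrt π * Real.Gamma (ν + 1 / 2)) *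
    ∫ t in (-1 : ℝ)..1, Real.exp (κ * t) * (1 - t ^ 2) ^ (ν - 1 / 2)

/-- The FvML normalizing constant. -/
noncomputable def cFvML (k : ℕ) (κ : ℝ) : ℝ :=
  (κ / 2) ^ ((k : ℝ) / 2 - 1) / (Real.Gamma ((k : ℝ) / 2) * besselI ((k : ℝ) / 2 - 1) κ)

/-- The FvML density `f_{κ,θ}(x) = c_{k,κ} exp(κ x'θ)`. -/
noncomputable def fvml (k : ℕ) (κ : ℝ) (θ x : EuclideanSpace ℝ (Fin k)) : ℝ :=
  cFvML k κ * Real.exp (κ * (inner ℝ x θ : ℝ))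


section Aux
open intervalIntegral


lemma meas_kernel (κ p : ℝ) : Measurable (fun t : ℝ => Real.exp (κ * t) * (1 - t ^ 2) ^ p) := by
  exact ((measurable_const.mul measurable_id).exp).mul
    ((measurable_const.sub (measurable_id.pow_const 2)).pow_const p)

lemma int_right {p : ℝ} (hp : -1 < p) : IntervalIntegrable (fun t : ℝ => (1 - t) ^ p) volume 0 1 := by
  have h := (intervalIntegral.intervalIntegrable_rpow' (a := 0) (b := 1) hp).comp_sub_left 1
  simpa using h.symm

lemma int_left {p : ℝ} (hp : -1 < p) : IntervalIntegrable (fun t : ℝ => (1 + t) ^ p) volume (-1) 0 := by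
  have h := (intervalIntegral.intervalIntegrable_rpow' (a := 0) (b := 1) hp).comp_add_left 1
  -- (fun x => (1 + x) ^ p) on (0-1)..(1-1) = -1..0
  simpa using h

lemma factor_bound {p x : ℝ} (h0 : (1:ℝ) ≤ x) (h1 : x ≤ 2) :
    x ^ p ≤ max 1 (2 ^ p) := by
  rcases le_or_gt 0 p with hp | hp
  · exact le_trans (Real.rpow_le_rpow (by linarith) h1 hp) (le_max_right _ _)
  · exact le_trans (Real.rpow_le_one_of_one_le_of_nonpos h0 hp.le) (le_max_left _ _)

lemma kernel_int_right {p : ℝ} (hp : -1 < p) (κ : ℝ) :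
    IntervalIntegrable (fun t : ℝ => Real.exp (κ * t) * (1 - t ^ 2) ^ p) volume 0 1 := by
  refine ((int_right hp).const_mul (Real.exp |κ| * max 1 (2 ^ p))).mono_fun
    (meas_kernel κ p).aestronglyMeasurable ?_
  filter_upwards [ae_restrict_mem measurableSet_uIoc] with t ht
  rw [Set.uIoc_of_le (by norm_num : (0:ℝ) ≤ 1)] at ht
  obtain ⟨ht0, ht1⟩ := ht
  have h1t : (0:ℝ) ≤ 1 - t := by linarith
  have h1t' : (0:ℝ) ≤ 1 + t := by linarith
  have hsplit : (1 - t ^ 2 : ℝ) ^ p = (1 - t) ^ p * (1 + t) ^ p := by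
    rw [← Real.mul_rpow h1t h1t']; ring_nf
  have he : Real.exp (κ * t) ≤ Real.exp |κ| := by
    apply Real.exp_le_exp.2
    calc κ * t ≤ |κ * t| := le_abs_self _
    _ = |κ| * |t| := abs_mul _ _
    _ ≤ |κ| * 1 := by
        apply mul_le_mul_of_nonneg_left _ (abs_nonneg _)
        rw [abs_le]; constructor <;> linarith
    _ = |κ| := mul_one _
  have hfac : (1 + t) ^ p ≤ max 1 (2 ^ p) := factor_bound (by linarith) (by linarith)
  have hpos : (0:ℝ) ≤ (1 - t) ^ p := Real.rpow_nonneg h1t _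
  have hpos2 : (0:ℝ) ≤ (1 + t) ^ p := Real.rpow_nonneg h1t' _
  simp only [Real.norm_eq_abs]
  rw [abs_mul, abs_of_nonneg (Real.exp_nonneg _), hsplit, abs_of_nonneg (mul_nonneg hpos hpos2)]
  rw [abs_of_nonneg (by positivity : (0:ℝ) ≤ Real.exp |κ| * max 1 (2 ^ p) * (1 - t) ^ p)]
  calc Real.exp (κ * t) * ((1 - t) ^ p * (1 + t) ^ p)
      ≤ Real.exp |κ| * ((1 - t) ^ p * max 1 (2 ^ p)) := by
        apply mul_le_mul he _ (by positivity) (Real.exp_nonneg _)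
        exact mul_le_mul_of_nonneg_left hfac hpos
    _ = Real.exp |κ| * max 1 (2 ^ p) * (1 - t) ^ p := by ring

lemma kernel_int_left {p : ℝ} (hp : -1 < p) (κ : ℝ) :
    IntervalIntegrable (fun t : ℝ => Real.exp (κ * t) * (1 - t ^ 2) ^ p) volume (-1) 0 := by
  refine ((int_left hp).const_mul (Real.exp |κ| * max 1 (2 ^ p))).mono_fun
    (meas_kernel κ p).aestronglyMeasurable ?_
  filter_upwards [ae_restrict_mem measurableSet_uIoc] with t ht
  rw [Set.uIoc_of_le (by norm_num : (-1:ℝ) ≤ 0)] at ht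
  obtain ⟨ht0, ht1⟩ := ht
  have h1t : (0:ℝ) ≤ 1 - t := by linarith
  have h1t' : (0:ℝ) ≤ 1 + t := by linarith
  have hsplit : (1 - t ^ 2 : ℝ) ^ p = (1 - t) ^ p * (1 + t) ^ p := by
    rw [← Real.mul_rpow h1t h1t']; ring_nf
  have he : Real.exp (κ * t) ≤ Real.exp |κ| := by
    apply Real.exp_le_exp.2
    calc κ * t ≤ |κ * t| := le_abs_self _
    _ = |κ| * |t| := abs_mul _ _
    _ ≤ |κ| * 1 := by
        apply mul_le_mul_of_nonneg_left _ (abs_nonneg _)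
        rw [abs_le]; constructor <;> linarith
    _ = |κ| := mul_one _
  have hfac : (1 - t) ^ p ≤ max 1 (2 ^ p) := factor_bound (by linarith) (by linarith)
  have hpos : (0:ℝ) ≤ (1 - t) ^ p := Real.rpow_nonneg h1t _
  have hpos2 : (0:ℝ) ≤ (1 + t) ^ p := Real.rpow_nonneg h1t' _
  simp only [Real.norm_eq_abs]
  rw [abs_mul, abs_of_nonneg (Real.exp_nonneg _), hsplit, abs_of_nonneg (mul_nonneg hpos hpos2)]
  rw [abs_of_nonneg (by positivity : (0:ℝ) ≤ Real.exp |κ| * max 1 (2 ^ p) * (1 + t) ^ p)]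
  calc Real.exp (κ * t) * ((1 - t) ^ p * (1 + t) ^ p)
      ≤ Real.exp |κ| * (max 1 (2 ^ p) * (1 + t) ^ p) := by
        apply mul_le_mul he _ (by positivity) (Real.exp_nonneg _)
        exact mul_le_mul_of_nonneg_right hfac hpos2
    _ = Real.exp |κ| * max 1 (2 ^ p) * (1 + t) ^ p := by ring

lemma kernel_int {p : ℝ} (hp : -1 < p) (κ : ℝ) :
    IntervalIntegrable (fun t : ℝ => Real.exp (κ * t) * (1 - t ^ 2) ^ p) volume (-1) 1 :=
  (kernel_int_left hp κ).trans (kernel_int_right hp κ)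

lemma kernel_pos {p : ℝ} (hp : -1 < p) (κ : ℝ) :
    0 < ∫ t in (-1:ℝ)..1, Real.exp (κ * t) * (1 - t ^ 2) ^ p := by
  apply intervalIntegral.intervalIntegral_pos_of_pos_on (kernel_int hp κ) _ (by norm_num)
  intro t ht
  have : (0:ℝ) < 1 - t ^ 2 := by nlinarith [ht.1, ht.2]
  positivity

lemma besselI_pos {ν κ : ℝ} (hν : 0 ≤ ν) (hκ : 0 < κ) : 0 < besselI ν κ := by
  unfold besselI
  have h1 : (0:ℝ) < (κ / 2) ^ ν := Real.rpow_pos_of_pos (by linarith) _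
  have h2 : (0:ℝ) < Real.sqrt π := Real.sqrt_pos.2 Real.pi_pos
  have h3 : (0:ℝ) < Real.Gamma (ν + 1 / 2) := Real.Gamma_pos_of_pos (by linarith)
  have h4 := kernel_pos (p := ν - 1/2) (by linarith) κ
  positivity

lemma J_hasDeriv {ν : ℝ} (hν : 0 ≤ ν) {κ : ℝ} (hκ : 0 < κ) :
    DifferentiableAt ℝ (fun u => ∫ t in (-1:ℝ)..1, Real.exp (u * t) * (1 - t ^ 2) ^ (ν - 1/2)) κ := by
  set p := ν - 1/2 with hp
  have hp' : (-1:ℝ) < p := by rw [hp]; linarith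
  have key := intervalIntegral.hasDerivAt_integral_of_dominated_loc_of_deriv_le
    (F := fun u t => Real.exp (u * t) * (1 - t ^ 2) ^ p)
    (F' := fun u t => (t * Real.exp (u * t)) * (1 - t ^ 2) ^ p)
    (x₀ := κ) (a := -1) (b := 1) (μ := volume)
    (bound := fun t => Real.exp (2 * κ) * (Real.exp (0 * t) * (1 - t ^ 2) ^ p))
    (s := Metric.ball κ (κ / 2)) (Metric.ball_mem_nhds _ (by linarith))
    (Filter.Eventually.of_forall fun u => (meas_kernel u p).aestronglyMeasurable)
    (kernel_int hp' κ)
    ((measurable_id.mul ((measurable_const.mul measurable_id).exp)).mul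
      ((measurable_const.sub (measurable_id.pow_const 2)).pow_const p)).aestronglyMeasurable
    ?_ ((kernel_int hp' 0).const_mul _) ?_
  · exact key.2.differentiableAt
  · refine Filter.Eventually.of_forall fun t ht u hu => ?_
    rw [Set.uIoc_of_le (by norm_num : (-1:ℝ) ≤ 1)] at ht
    have ht1 : |t| ≤ 1 := by rw [abs_le]; exact ⟨ht.1.le, ht.2⟩
    have hu' : |u - κ| < κ / 2 := by simpa [Real.dist_eq] using hu
    have h1t : (0:ℝ) ≤ 1 - t ^ 2 := by nlinarith [abs_nonneg t, sq_abs t, ht1]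
    have hpos : (0:ℝ) ≤ (1 - t ^ 2) ^ p := Real.rpow_nonneg h1t _
    simp only [Real.norm_eq_abs, zero_mul, Real.exp_zero, one_mul]
    rw [abs_mul, abs_mul, abs_of_nonneg (Real.exp_nonneg _), abs_of_nonneg hpos]
    have : |t| * Real.exp (u * t) ≤ Real.exp (2 * κ) := by
      have : Real.exp (u * t) ≤ Real.exp (2 * κ) := by
        apply Real.exp_le_exp.2
        have : u * t ≤ |u| * |t| := le_trans (le_abs_self _) (abs_mul _ _).le
        have hu2 : |u| ≤ 2 * κ := by
          rw [abs_le]; rw [abs_lt] at hu'; constructor <;> linarith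
        nlinarith [abs_nonneg u, abs_nonneg t]
      calc |t| * Real.exp (u * t) ≤ 1 * Real.exp (u * t) := by
            exact mul_le_mul_of_nonneg_right ht1 (Real.exp_nonneg _)
        _ ≤ Real.exp (2 * κ) := by rw [one_mul]; exact this
    exact mul_le_mul_of_nonneg_right this hpos
  · refine Filter.Eventually.of_forall fun t ht u hu => ?_
    have h : HasDerivAt (fun u : ℝ => Real.exp (u * t)) (t * Real.exp (u * t)) u := by
      simpa [mul_comm] using ((hasDerivAt_mul_const t).exp (x := u))
    exact h.mul_const _

lemma cFvML_diff {k : ℕ} (hk : 2 ≤ k) {κ : ℝ} (hκ : 0 < κ) :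
    DifferentiableAt ℝ (fun u => cFvML k u) κ := by
  have hν : (0:ℝ) ≤ (k:ℝ)/2 - 1 := by
    have : (2:ℝ) ≤ (k:ℝ) := by exact_mod_cast hk
    linarith
  have hnum : DifferentiableAt ℝ (fun u : ℝ => (u / 2) ^ ((k:ℝ)/2 - 1)) κ :=
    (differentiableAt_id.div_const 2).rpow_const (Or.inl (by positivity))
  have hbes : DifferentiableAt ℝ (fun u => besselI ((k:ℝ)/2 - 1) u) κ := by
    unfold besselI
    have h1 : DifferentiableAt ℝ (fun u : ℝ => (u / 2) ^ ((k:ℝ)/2 - 1) /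
        (Real.sqrt π * Real.Gamma ((k:ℝ)/2 - 1 + 1 / 2))) κ := hnum.div_const _
    exact h1.mul (J_hasDeriv hν hκ)
  have hden : DifferentiableAt ℝ (fun u => Real.Gamma ((k:ℝ)/2) * besselI ((k:ℝ)/2 - 1) u) κ :=
    hbes.const_mul _
  have hne : Real.Gamma ((k:ℝ)/2) * besselI ((k:ℝ)/2 - 1) κ ≠ 0 := by
    have h1 : (0:ℝ) < Real.Gamma ((k:ℝ)/2) := Real.Gamma_pos_of_pos (by linarith)
    have h2 := besselI_pos hν hκ
    positivity
  exact hnum.div hden hne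

lemma cFvML_pos {k : ℕ} (hk : 2 ≤ k) {κ : ℝ} (hκ : 0 < κ) : 0 < cFvML k κ := by
  have hν : (0:ℝ) ≤ (k:ℝ)/2 - 1 := by
    have : (2:ℝ) ≤ (k:ℝ) := by exact_mod_cast hk
    linarith
  unfold cFvML
  have h0 : (0:ℝ) < (κ / 2) ^ ((k:ℝ)/2 - 1) := Real.rpow_pos_of_pos (by linarith) _
  have h1 : (0:ℝ) < Real.Gamma ((k:ℝ)/2) := Real.Gamma_pos_of_pos (by linarith)
  have h2 := besselI_pos hν hκ
  positivity

lemma key_est (κ s t a0 a1 A' : ℝ) (hκ : 0 < κ) (hs1 : |s| ≤ 1) (hsκ : 0 ≤ κ + s)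
    (ht : |t| ≤ 1) :
    |a1 * Real.exp ((κ + s) * t / 2) - a0 * Real.exp (κ * t / 2) -
        s * (t / 2 * a0 * Real.exp (κ * t / 2) + A' * Real.exp (κ * t / 2))|
      ≤ Real.exp ((κ + 1) / 2) * |a1 - a0 - s * A'| +
        (Real.exp ((κ + 1) / 2) * (|a0| / 4 + |A'|)) * s ^ 2 := by
  set C := Real.exp ((κ + 1) / 2) with hC
  set E0 := Real.exp (κ * t / 2) with hE0
  set y := s * t / 2 with hy
  have hCpos : 0 < C := Real.exp_pos _
  have hE0pos : 0 < E0 := Real.exp_pos _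
  have hts : -1 ≤ t ∧ t ≤ 1 := abs_le.mp ht
  have hss : -1 ≤ s ∧ s ≤ 1 := abs_le.mp hs1
  have hE : Real.exp ((κ + s) * t / 2) = E0 * Real.exp y := by
    rw [hE0, hy, ← Real.exp_add]; ring_nf
  have hy1 : |y| ≤ 1 := by
    rw [hy, abs_div, abs_mul]
    rw [abs_of_nonneg (by norm_num : (0:ℝ) ≤ 2)]
    have : |s| * |t| ≤ 1 := by nlinarith [abs_nonneg s, abs_nonneg t]
    linarith
  have hid : a1 * Real.exp ((κ + s) * t / 2) - a0 * E0 - s * (t / 2 * a0 * E0 + A' * E0)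
      = (a1 - a0 - s * A') * (E0 * Real.exp y) + a0 * E0 * (Real.exp y - 1 - y) +
        s * A' * (E0 * (Real.exp y - 1)) := by
    rw [hE, hy]; ring
  have hE0C : E0 ≤ C := by
    apply Real.exp_le_exp.2
    nlinarith [hts.1, hts.2]
  have hEC : E0 * Real.exp y ≤ C := by
    rw [← hE]
    apply Real.exp_le_exp.2
    nlinarith [hts.1, hts.2, hss.2]
  have h2 := Real.abs_exp_sub_one_sub_id_le hy1
  have h3 := Real.abs_exp_sub_one_le hy1
  have hy2 : y ^ 2 ≤ s ^ 2 / 4 := by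
    have ht2 : t ^ 2 ≤ 1 := by nlinarith [hts.1, hts.2]
    rw [hy]
    nlinarith [mul_nonneg (sq_nonneg s) (by linarith : (0:ℝ) ≤ 1 - t ^ 2)]
  have hyabs : 2 * |y| ≤ |s| := by
    rw [hy, abs_div, abs_mul, abs_of_nonneg (by norm_num : (0:ℝ) ≤ 2)]
    nlinarith [abs_nonneg s, abs_nonneg t]
  have t1 : |(a1 - a0 - s * A') * (E0 * Real.exp y)| ≤ |a1 - a0 - s * A'| * C := by
    rw [abs_mul, abs_of_nonneg (mul_pos hE0pos (Real.exp_pos y)).le]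
    exact mul_le_mul_of_nonneg_left hEC (abs_nonneg _)
  have t2 : |a0 * E0 * (Real.exp y - 1 - y)| ≤ |a0| * (C * (s ^ 2 / 4)) := by
    rw [abs_mul, abs_mul, abs_of_nonneg hE0pos.le, mul_assoc]
    apply mul_le_mul_of_nonneg_left _ (abs_nonneg _)
    calc E0 * |Real.exp y - 1 - y| ≤ C * y ^ 2 :=
          mul_le_mul hE0C h2 (abs_nonneg _) hCpos.le
      _ ≤ C * (s ^ 2 / 4) := mul_le_mul_of_nonneg_left hy2 hCpos.le
  have t3 : |s * A' * (E0 * (Real.exp y - 1))| ≤ |A'| * (C * s ^ 2) := by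
    rw [abs_mul, abs_mul, abs_mul, abs_of_nonneg hE0pos.le]
    have hin : E0 * |Real.exp y - 1| ≤ C * |s| := by
      calc E0 * |Real.exp y - 1| ≤ C * (2 * |y|) :=
            mul_le_mul hE0C h3 (abs_nonneg _) hCpos.le
        _ ≤ C * |s| := mul_le_mul_of_nonneg_left hyabs hCpos.le
    calc |s| * |A'| * (E0 * |Real.exp y - 1|) ≤ |s| * |A'| * (C * |s|) := by
          apply mul_le_mul_of_nonneg_left hin (by positivity)
      _ = |A'| * (C * (|s| * |s|)) := by ring
      _ = |A'| * (C * s ^ 2) := by rw [abs_mul_abs_self, ← sq]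
  calc |a1 * Real.exp ((κ + s) * t / 2) - a0 * E0 - s * (t / 2 * a0 * E0 + A' * E0)|
      = |(a1 - a0 - s * A') * (E0 * Real.exp y) + a0 * E0 * (Real.exp y - 1 - y) +
          s * A' * (E0 * (Real.exp y - 1))| := by rw [hid]
    _ ≤ |(a1 - a0 - s * A') * (E0 * Real.exp y) + a0 * E0 * (Real.exp y - 1 - y)| +
          |s * A' * (E0 * (Real.exp y - 1))| := abs_add_le _ _
    _ ≤ |(a1 - a0 - s * A') * (E0 * Real.exp y)| + |a0 * E0 * (Real.exp y - 1 - y)| +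
          |s * A' * (E0 * (Real.exp y - 1))| := by
            have := abs_add_le ((a1 - a0 - s * A') * (E0 * Real.exp y))
              (a0 * E0 * (Real.exp y - 1 - y))
            linarith
    _ ≤ |a1 - a0 - s * A'| * C + |a0| * (C * (s ^ 2 / 4)) + |A'| * (C * s ^ 2) := by
          linarith
    _ = C * |a1 - a0 - s * A'| + (C * (|a0| / 4 + |A'|)) * s ^ 2 := by ring

lemma sqrt_fvml_eq {k : ℕ} (hk : 2 ≤ k) {u : ℝ} (hu : 0 < u)
    (θ x : EuclideanSpace ℝ (Fin k)) :
    Real.sqrt (fvml k u θ x) =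
      Real.sqrt (cFvML k u) * Real.exp (u * (inner ℝ x θ : ℝ) / 2) := by
  rw [fvml, Real.sqrt_mul (cFvML_pos hk hu).le]
  congr 1
  have h : Real.exp (u * (inner ℝ x θ : ℝ)) = (Real.exp (u * (inner ℝ x θ : ℝ) / 2)) ^ 2 := by
    rw [pow_two, ← Real.exp_add]; ring_nf
  rw [h, Real.sqrt_sq (Real.exp_nonneg _)]


end Aux

/-- `κ ↦ √f_{κ,θ}` is differentiable in quadratic mean:
`∫_{S^{k-1}} (√f_{κ+s,θ} - √f_{κ,θ} - s ∂_κ √f_{κ,θ})² dσ = o(s²)` as `s → 0`, where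
`∂_κ √f_{κ,θ}(x) = (x'θ/2)√c_{k,κ} e^{κ x'θ/2} + (∂_κ √c_{k,κ}) e^{κ x'θ/2}`. -/
theorem stmt18 (k : ℕ) (hk : 2 ≤ k) (κ : ℝ) (hκ : 0 < κ)
    (θ : EuclideanSpace ℝ (Fin k)) (hθ : ‖θ‖ = 1) :
    (fun s : ℝ =>
        ∫ x : Metric.sphere (0 : EuclideanSpace ℝ (Fin k)) 1,
          (Real.sqrt (fvml k (κ + s) θ (x : EuclideanSpace ℝ (Fin k))) -
            Real.sqrt (fvml k κ θ (x : EuclideanSpace ℝ (Fin k))) -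
            s * (((inner ℝ (x : EuclideanSpace ℝ (Fin k)) θ : ℝ) / 2) *
                  Real.sqrt (cFvML k κ) *
                  Real.exp (κ * (inner ℝ (x : EuclideanSpace ℝ (Fin k)) θ : ℝ) / 2) +
                deriv (fun u => Real.sqrt (cFvML k u)) κ *
                  Real.exp (κ * (inner ℝ (x : EuclideanSpace ℝ (Fin k)) θ : ℝ) / 2))) ^ 2
          ∂((volume : Measure (EuclideanSpace ℝ (Fin k))).toSphere))
      =o[nhds 0] (fun s : ℝ => s ^ 2) := by
  have hdiff : DifferentiableAt ℝ (fun u => Real.sqrt (cFvML k u)) κ :=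
    (cFvML_diff hk hκ).sqrt (ne_of_gt (cFvML_pos hk hκ))
  set a : ℝ → ℝ := fun u => Real.sqrt (cFvML k u) with ha
  set A' : ℝ := deriv a κ with hA'
  have hA : HasDerivAt a A' κ := hdiff.hasDerivAt
  have hr : (fun s => a (κ + s) - a κ - s * A') =o[nhds 0] (fun s : ℝ => s) := by
    have h1 := hasDerivAt_iff_isLittleO.mp hA
    have h2 : Filter.Tendsto (fun s : ℝ => κ + s) (nhds 0) (nhds κ) := by
      simpa using (tendsto_const_nhds.add Filter.tendsto_id :
        Filter.Tendsto (fun s : ℝ => κ + s) (nhds (0:ℝ)) (nhds (κ + 0)))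
    have h3 := h1.comp_tendsto h2
    simp only [Function.comp_def, add_sub_cancel_left, smul_eq_mul] at h3
    exact h3
  set C : ℝ := Real.exp ((κ + 1) / 2) with hC
  set C2 : ℝ := C * (|a κ| / 4 + |A'|) with hC2
  set e : ℝ → ℝ := fun s => C * |a (κ + s) - a κ - s * A'| + C2 * s ^ 2 with he_def
  have he : e =o[nhds 0] (fun s : ℝ => s) := by
    apply IsLittleO.add
    · exact hr.abs_left.const_mul_left C
    · have h : (fun s : ℝ => s ^ 2) =o[nhds 0] (fun s : ℝ => s) := by
        simpa using isLittleO_pow_pow (𝕜 := ℝ) (m := 1) (n := 2) one_lt_two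
      exact h.const_mul_left C2
  have hee : (fun s => e s ^ 2) =o[nhds 0] (fun s : ℝ => s ^ 2) := by
    simpa [pow_two] using he.mul he
  refine IsBigO.trans_isLittleO ?_ hee
  set μ := (volume : Measure (EuclideanSpace ℝ (Fin k))).toSphere with hμ
  apply Asymptotics.IsBigO.of_bound (μ Set.univ).toReal
  have hev : ∀ᶠ s : ℝ in nhds 0, |s| < min 1 κ := by
    have : Metric.ball (0:ℝ) (min 1 κ) ∈ nhds (0:ℝ) :=
      Metric.ball_mem_nhds _ (lt_min one_pos hκ)
    filter_upwards [this] with s hs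
    simpa [Real.dist_eq] using hs
  filter_upwards [hev] with s hs
  have hs1 : |s| ≤ 1 := le_of_lt (lt_of_lt_of_le hs (min_le_left _ _))
  have hsκ : 0 < κ + s := by
    have := lt_of_lt_of_le hs (min_le_right _ _)
    rw [abs_lt] at this; linarith
  have hnn : 0 ≤ e s := by
    have h1 : 0 ≤ C := (Real.exp_pos _).le
    have h2 : 0 ≤ C2 := by
      rw [hC2]; positivity
    rw [he_def]; positivity
  have hb : ∀ x : Metric.sphere (0 : EuclideanSpace ℝ (Fin k)) 1,
      ‖(Real.sqrt (fvml k (κ + s) θ (x : EuclideanSpace ℝ (Fin k))) -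
            Real.sqrt (fvml k κ θ (x : EuclideanSpace ℝ (Fin k))) -
            s * (((inner ℝ (x : EuclideanSpace ℝ (Fin k)) θ : ℝ) / 2) *
                  Real.sqrt (cFvML k κ) *
                  Real.exp (κ * (inner ℝ (x : EuclideanSpace ℝ (Fin k)) θ : ℝ) / 2) +
                deriv (fun u => Real.sqrt (cFvML k u)) κ *
                  Real.exp (κ * (inner ℝ (x : EuclideanSpace ℝ (Fin k)) θ : ℝ) / 2))) ^ 2‖
        ≤ e s ^ 2 := by
    intro x
    set t : ℝ := (inner ℝ (x : EuclideanSpace ℝ (Fin k)) θ : ℝ) with htdef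
    have ht : |t| ≤ 1 := by
      rw [htdef]
      calc |(inner ℝ (x : EuclideanSpace ℝ (Fin k)) θ : ℝ)|
          ≤ ‖(x : EuclideanSpace ℝ (Fin k))‖ * ‖θ‖ := abs_real_inner_le_norm _ _
        _ = 1 := by rw [norm_eq_of_mem_sphere, hθ, mul_one]
    rw [sqrt_fvml_eq hk hsκ θ _, sqrt_fvml_eq hk hκ θ _]
    have hkey := key_est κ s t (a κ) (a (κ + s)) A' hκ hs1 hsκ.le ht
    rw [Real.norm_eq_abs, abs_pow]
    have hstep : |a (κ + s) * Real.exp ((κ + s) * t / 2) - a κ * Real.exp (κ * t / 2) -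
        s * (t / 2 * a κ * Real.exp (κ * t / 2) + A' * Real.exp (κ * t / 2))| ≤ e s := by
      refine le_trans hkey ?_
      simp only [he_def, hC2, hC]
      exact le_rfl
    exact pow_le_pow_left₀ (abs_nonneg _) hstep 2
  have hint := MeasureTheory.norm_integral_le_of_norm_le_const (μ := μ)
    (C := e s ^ 2) (Filter.Eventually.of_forall hb)
  refine le_trans hint (le_of_eq ?_)
  rw [Real.norm_eq_abs, abs_of_nonneg (sq_nonneg (e s) |>.trans_eq (by rw [sq])), mul_comm]; rfl
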